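/- Let N be even and let A ⊆ [0, n] be a nonempty symmetric set (x ∈ A implies n − x ∈ A). Then there exists an integer c ∈ [0, n] with P_{N/2}([c, n−c]) ≥ P_{N/2}(A), where the length satisfies n − 2c + 1 = |A| if n or |A| is odd, and n − 2c + 1 = |A| + 1 if both n and |A| are even. -/
import Mathlib


def hyperPMF (M n N x : ℕ) : ℚ :=
  if x ≤ n then (M.choose x * (N - M).choose (n - x) : ℚ) / (N.choose n) else 0


-- step lemma
lemma step_lemma (K x s : ℕ) (hxs : x ≤ s) :
    K.choose x * K.choose (s+1) ≤ K.choose (x+1) * K.choose s := by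
  rcases le_or_gt s K with hsK | hsK
  · have h1 : K.choose (s+1) * (s+1) = K.choose s * (K - s) := Nat.choose_succ_right_eq K s
    have h2 : K.choose (x+1) * (x+1) = K.choose x * (K - x) := Nat.choose_succ_right_eq K x
    have key : (K - s) * (x+1) ≤ (K - x) * (s+1) :=
      Nat.mul_le_mul (Nat.sub_le_sub_left hxs K) (by omega)
    have : K.choose x * K.choose (s+1) * ((x+1) * (s+1))
        ≤ K.choose (x+1) * K.choose s * ((x+1) * (s+1)) := by
      calc K.choose x * K.choose (s+1) * ((x+1) * (s+1))
          = K.choose x * (K.choose (s+1) * (s+1)) * (x+1) := by ring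
        _ = K.choose x * K.choose s * ((K - s) * (x+1)) := by rw [h1]; ring
        _ ≤ K.choose x * K.choose s * ((K - x) * (s+1)) :=
            Nat.mul_le_mul_left _ key
        _ = K.choose x * (K - x) * (K.choose s * (s+1)) := by ring
        _ = K.choose (x+1) * (x+1) * (K.choose s * (s+1)) := by rw [h2]
        _ = K.choose (x+1) * K.choose s * ((x+1) * (s+1)) := by ring
    exact Nat.le_of_mul_le_mul_right this (by positivity)
  · rw [Nat.choose_eq_zero_of_lt (show K < s + 1 by omega)]
    simp

-- monotone: f x = C(K,x)*C(K,n-x) increasing up to n/2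
lemma f_mono (K n : ℕ) : ∀ y, ∀ x ≤ y, 2 * y ≤ n →
    K.choose x * K.choose (n - x) ≤ K.choose y * K.choose (n - y) := by
  intro y
  induction y with
  | zero => intro x hx _; interval_cases x; rfl
  | succ y ih =>
    intro x hx hy
    rcases Nat.lt_succ_iff_lt_or_eq.mp (Nat.lt_succ_of_le hx) with h | h
    · have hxy : x ≤ y := by omega
      calc K.choose x * K.choose (n - x) ≤ K.choose y * K.choose (n - y) :=
            ih x hxy (by omega)
        _ ≤ K.choose (y+1) * K.choose (n - (y+1)) := by
            have h1 : n - y = (n - (y+1)) + 1 := by omega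
            rw [h1]
            exact step_lemma K y (n - (y+1)) (by omega)
    · subst h; exact le_refl _

lemma pmf_nonneg (M n N x : ℕ) : 0 ≤ hyperPMF M n N x := by
  unfold _root_.hyperPMF; split <;> positivity

lemma pmf_eq (K n x : ℕ) (hx : x ≤ n) :
    hyperPMF K n (2*K) x = (K.choose x * K.choose (n - x) : ℚ) / ((2*K).choose n) := by
  unfold _root_.hyperPMF
  rw [show 2*K - K = K from by omega, if_pos hx]

lemma pmf_symm (K n x : ℕ) (hx : x ≤ n) :
    hyperPMF K n (2*K) (n - x) = hyperPMF K n (2*K) x := by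
  rw [pmf_eq K n x hx, pmf_eq K n (n-x) (Nat.sub_le n x)]
  have : n - (n - x) = x := by omega
  rw [this, mul_comm]

lemma pmf_mono (K n x y : ℕ) (hnK : n ≤ 2 * K) (hxy : x ≤ y) (hy : 2 * y ≤ n) :
    hyperPMF K n (2*K) x ≤ hyperPMF K n (2*K) y := by
  rw [pmf_eq K n x (by omega), pmf_eq K n y (by omega)]
  have hpos : (0:ℚ) < ((2*K).choose n : ℚ) := by
    exact_mod_cast Nat.choose_pos hnK
  apply div_le_div_of_nonneg_right ?_ hpos.le
  exact_mod_cast f_mono K n y x hxy hy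

lemma even_card_symm (n : ℕ) (hn : Odd n) : ∀ (A : Finset ℕ),
    A ⊆ Finset.range (n+1) → (∀ x ∈ A, n - x ∈ A) → Even A.card := by
  intro A
  induction A using Finset.strongInduction with
  | _ A ih =>
    intro hA hsym
    rcases A.eq_empty_or_nonempty with rfl | ⟨a, ha⟩
    · simp
    · have han : a ≤ n := by have := hA ha; simp at this; omega
      have hb : n - a ∈ A := hsym a ha
      have hab : n - a ≠ a := by obtain ⟨t, ht⟩ := hn; omega
      set A' := (A.erase a).erase (n - a) with hA'
      have hsub : A' ⊂ A := by
        apply Finset.ssubset_of_subset_of_ssubset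
        · exact Finset.erase_subset _ _
        · exact Finset.erase_ssubset ha
      have hA'card : A'.card = A.card - 2 := by
        rw [hA', Finset.card_erase_of_mem (Finset.mem_erase.mpr ⟨hab, hb⟩),
          Finset.card_erase_of_mem ha]
        omega
      have hA'sub : A' ⊆ Finset.range (n+1) :=
        Finset.Subset.trans (Finset.Subset.trans (Finset.erase_subset _ _) (Finset.erase_subset _ _)) hA
      have hA'sym : ∀ x ∈ A', n - x ∈ A' := by
        intro x hx
        have hx1 : x ∈ A := (Finset.mem_erase.mp (Finset.mem_erase.mp hx).2).2
        have hxa : x ≠ a := (Finset.mem_erase.mp (Finset.mem_erase.mp hx).2).1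
        have hxb : x ≠ n - a := (Finset.mem_erase.mp hx).1
        have hxn : x ≤ n := by have := hA hx1; simp at this; omega
        refine Finset.mem_erase.mpr ⟨?_, Finset.mem_erase.mpr ⟨?_, hsym x hx1⟩⟩
        · omega
        · omega
      have := ih A' hsub hA'sub hA'sym
      have hcard : 2 ≤ A.card :=
        Finset.one_lt_card.mpr ⟨a, ha, n - a, hb, hab.symm⟩
      rcases this with ⟨k, hk⟩
      exact ⟨k + 1, by omega⟩

lemma pmf_min_in (K n c y : ℕ) (hnK : n ≤ 2*K) (hc : 2*c ≤ n) (hy : y ∈ Finset.Icc c (n - c)) :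
    hyperPMF K n (2*K) c ≤ hyperPMF K n (2*K) y := by
  rw [Finset.mem_Icc] at hy
  rcases le_or_gt (2*y) n with h | h
  · exact pmf_mono K n c y hnK hy.1 h
  · have hyn : y ≤ n := by omega
    rw [← pmf_symm K n y hyn]
    exact pmf_mono K n c (n - y) hnK (by omega) (by omega)

lemma pmf_out (K n c x : ℕ) (hnK : n ≤ 2*K) (hc : 2*c ≤ n) (hx : x ≤ n)
    (hout : x < c ∨ n - c < x) : hyperPMF K n (2*K) x ≤ hyperPMF K n (2*K) c := by
  rcases hout with h | h
  · exact pmf_mono K n x c hnK (by omega) hc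
  · rw [← pmf_symm K n x hx]
    exact pmf_mono K n (n - x) c hnK (by omega) hc

lemma sum_le_interval (K n c : ℕ) (hnK : n ≤ 2*K) (hc : 2*c ≤ n)
    (A : Finset ℕ) (hA : A ⊆ Finset.range (n+1)) (hcard : A.card ≤ n - 2*c + 1) :
    ∑ x ∈ A, hyperPMF K n (2*K) x ≤ ∑ x ∈ Finset.Icc c (n - c), hyperPMF K n (2*K) x := by
  set I := Finset.Icc c (n - c) with hIdef
  set f := hyperPMF K n (2*K) with hf
  have hI : I.card = n - 2*c + 1 := by rw [hIdef, Nat.card_Icc]; omega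
  have h1 : ∑ x ∈ A \ I, f x ≤ (A \ I).card • f c := by
    apply Finset.sum_le_card_nsmul
    intro x hx
    have hxA : x ∈ A := (Finset.mem_sdiff.mp hx).1
    have hxI : x ∉ I := (Finset.mem_sdiff.mp hx).2
    have hxn : x ≤ n := by have := hA hxA; simp at this; omega
    apply pmf_out K n c x hnK hc hxn
    rw [hIdef, Finset.mem_Icc] at hxI
    omega
  have h2 : (I \ A).card • f c ≤ ∑ x ∈ I \ A, f x := by
    apply Finset.card_nsmul_le_sum
    intro y hy
    exact pmf_min_in K n c y hnK hc (Finset.mem_sdiff.mp hy).1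
  have hc1 : (A ∩ I).card + (A \ I).card = A.card := Finset.card_inter_add_card_sdiff A I
  have hc2 : (I ∩ A).card + (I \ A).card = I.card := Finset.card_inter_add_card_sdiff I A
  have hinter : (A ∩ I).card = (I ∩ A).card := by rw [Finset.inter_comm]
  have hcc : (A \ I).card ≤ (I \ A).card := by omega
  have h3 : (A \ I).card • f c ≤ (I \ A).card • f c := by
    have := pmf_nonneg K n (2*K) c
    rw [nsmul_eq_mul, nsmul_eq_mul]
    exact mul_le_mul_of_nonneg_right (by exact_mod_cast hcc) this
  have d1 : ∑ x ∈ A ∩ I, f x + ∑ x ∈ A \ I, f x = ∑ x ∈ A, f x :=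
    Finset.sum_inter_add_sum_sdiff A I f
  have d2 : ∑ x ∈ I ∩ A, f x + ∑ x ∈ I \ A, f x = ∑ x ∈ I, f x :=
    Finset.sum_inter_add_sum_sdiff I A f
  have dinter : ∑ x ∈ A ∩ I, f x = ∑ x ∈ I ∩ A, f x := by rw [Finset.inter_comm]
  linarith

theorem symmetric_interval_domination' (n K : ℕ) (hn : 0 < n) (hnN : n ≤ 2 * K)
    (A : Finset ℕ) (hA : A ⊆ Finset.range (n + 1)) (hne : A.Nonempty)
    (hsym : ∀ x ∈ A, n - x ∈ A) :
    ∃ c : ℕ, c ≤ n ∧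
      ((∑ x ∈ A, hyperPMF K n (2 * K) x)
        ≤ ∑ x ∈ Finset.Icc c (n - c), hyperPMF K n (2 * K) x) ∧
      ((Odd n ∨ Odd A.card) → (n : ℤ) - 2 * c + 1 = A.card) ∧
      ((Even n ∧ Even A.card) → (n : ℤ) - 2 * c + 1 = A.card + 1) := by
  set m := A.card with hm
  have hm1 : 1 ≤ m := Finset.card_pos.mpr hne
  have hmn : m ≤ n + 1 := by
    calc m ≤ (Finset.range (n+1)).card := Finset.card_le_card hA
      _ = n + 1 := Finset.card_range (n+1)
  rcases Nat.even_or_odd n with hne' | hno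
  · rcases Nat.even_or_odd m with hme | hmo
    · -- both even: c = (n - m)/2
      have hn2 : n % 2 = 0 := Nat.even_iff.mp hne'
      have hm2 : m % 2 = 0 := Nat.even_iff.mp hme
      refine ⟨(n - m)/2, by omega, ?_, ?_, ?_⟩
      · exact sum_le_interval K n _ hnN (by omega) A hA (by omega)
      · rintro (h | h)
        · exact absurd h (Nat.not_odd_iff_even.mpr hne')
        · exact absurd h (Nat.not_odd_iff_even.mpr hme)
      · intro _
        push_cast
        omega
    · -- m odd: c = (n + 1 - m)/2
      have hn2 : n % 2 = 0 := Nat.even_iff.mp hne'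
      have hm2 : m % 2 = 1 := Nat.odd_iff.mp hmo
      refine ⟨(n + 1 - m)/2, by omega, ?_, ?_, ?_⟩
      · exact sum_le_interval K n _ hnN (by omega) A hA (by omega)
      · intro _; push_cast; omega
      · rintro ⟨_, h⟩; exact absurd h (Nat.not_even_iff_odd.mpr hmo)
  · -- n odd: m even
    have hme : Even m := even_card_symm n hno A hA hsym
    have hn2 : n % 2 = 1 := Nat.odd_iff.mp hno
    have hm2 : m % 2 = 0 := Nat.even_iff.mp hme
    refine ⟨(n + 1 - m)/2, by omega, ?_, ?_, ?_⟩
    · exact sum_le_interval K n _ hnN (by omega) A hA (by omega)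
    · intro _; push_cast; omega
    · rintro ⟨h, _⟩; exact absurd h (Nat.not_even_iff_odd.mpr hno)

/-- For N = 2K even and a nonempty symmetric A ⊆ [0,n], there is c ∈ [0,n] with
P_{N/2}([c, n−c]) ≥ P_{N/2}(A), where n − 2c + 1 = |A| if n or |A| is odd, and
n − 2c + 1 = |A| + 1 if both n and |A| are even. -/
theorem symmetric_interval_domination (n K : ℕ) (hn : 0 < n) (hnN : n ≤ 2 * K)
    (A : Finset ℕ) (hA : A ⊆ Finset.range (n + 1)) (hne : A.Nonempty)
    (hsym : ∀ x ∈ A, n - x ∈ A) :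
    ∃ c : ℕ, c ≤ n ∧
      ((∑ x ∈ A, hyperPMF K n (2 * K) x)
        ≤ ∑ x ∈ Finset.Icc c (n - c), hyperPMF K n (2 * K) x) ∧
      ((Odd n ∨ Odd A.card) → (n : ℤ) - 2 * c + 1 = A.card) ∧
      ((Even n ∧ Even A.card) → (n : ℤ) - 2 * c + 1 = A.card + 1) := by
  exact symmetric_interval_domination' n K hn hnN A hA hne hsym
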